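/- Let p be a positive integer and β > p. For any nonempty open interval J₀ ⊆ [-p, p], there exists a positive integer n₀ such that for all n ≥ n₀, the open interval (-p, p) is contained in U_β^n(J₀). -/

import Mathlib

/-- The signed fractional part `{t}₂`: the unique element of `(-1, 1]` with `t - {t}₂ ∈ 2ℤ`. -/
noncomputable def fract2 (t : ℝ) : ℝ := t - 2 * ⌈(t - 1) / 2⌉

/-- The Gauss-type map `U_β(x) = p·{-β/x}₂`, with `U_β(0) = 0`. -/
noncomputable def Ubeta (p β : ℝ) (x : ℝ) : ℝ := if x = 0 then 0 else p * fract2 (-β / x)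

open Set

section
variable {P β : ℝ}

lemma fract2_branch (k : ℤ) (t : ℝ) (h1 : 2*(k:ℝ) - 1 < t) (h2 : t ≤ 2*(k:ℝ)+1) :
    fract2 t = t - 2*(k:ℝ) := by
  unfold fract2
  have hc : ⌈(t - 1) / 2⌉ = k := by
    rw [Int.ceil_eq_iff]
    exact ⟨by linarith, by linarith⟩
  rw [hc]

lemma fract2_self (z : ℝ) (h1 : -1 < z) (h2 : z ≤ 1) (k : ℤ) : fract2 (z + 2*(k:ℝ)) = z := by
  have := fract2_branch k (z + 2*(k:ℝ)) (by linarith) (by linarith)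
  linarith [this]

lemma Ubeta_of_t (hβ : 0 < β) (t : ℝ) (ht : t ≠ 0) :
    Ubeta P β (-β / t) = P * fract2 t := by
  have hx : -β / t ≠ 0 := by
    simp only [ne_eq, div_eq_zero_iff, neg_eq_zero, not_or]
    exact ⟨ne_of_gt hβ, ht⟩
  rw [Ubeta, if_neg hx]
  congr 2
  field_simp

lemma invmem (hβ : 0 < β) {x₁ x₂ t : ℝ} (hss : 0 < x₁ ∨ x₂ < 0) (h12 : x₁ < x₂)
    (ht1 : -β/x₁ < t) (ht2 : t < -β/x₂) : x₁ < -β/t ∧ -β/t < x₂ ∧ t ≠ 0 := by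
  rcases hss with hpos | hneg
  · have hx2 : 0 < x₂ := lt_trans hpos h12
    have hs : -β/x₂ < 0 := div_neg_of_neg_of_pos (by linarith) hx2
    have htn : t < 0 := lt_trans ht2 hs
    have e1 : -β < t * x₁ := by
      have := (div_lt_iff₀ hpos).mp ht1
      linarith
    have e2 : t * x₂ < -β := by
      have := (lt_div_iff₀ hx2).mp ht2
      linarith
    refine ⟨?_, ?_, ne_of_lt htn⟩
    · rw [lt_div_iff_of_neg htn]; linarith
    · rw [div_lt_iff_of_neg htn]; linarith
  · have hx1 : x₁ < 0 := lt_trans h12 hneg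
    have hr : 0 < -β/x₁ := div_pos_of_neg_of_neg (by linarith) hx1
    have htp : 0 < t := lt_trans hr ht1
    have e1 : t * x₁ < -β := by
      have := (div_lt_iff_of_neg hx1).mp ht1
      linarith
    have e2 : -β < t * x₂ := by
      have := (lt_div_iff_of_neg hneg).mp ht2
      linarith
    refine ⟨?_, ?_, ne_of_gt htp⟩
    · rw [lt_div_iff₀ htp]; linarith
    · rw [div_lt_iff₀ htp]; linarith

-- capture from interval (0,d)
lemma capture_right (hP : 0 < P) (hβ : 0 < β) {d : ℝ} (hd : 0 < d) :
    Ioc (-P) P ⊆ Ubeta P β '' Ioo 0 d := by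
  rintro y ⟨hy1, hy2⟩
  have hz1 : -1 < y/P := by rw [lt_div_iff₀ hP]; linarith
  have hz2 : y/P ≤ 1 := by rw [div_le_one hP]; linarith
  obtain ⟨t, htlt, hft⟩ : ∃ t : ℝ, t < -β/d ∧ fract2 t = y/P := by
    refine ⟨y/P + 2*((⌊(-β/d - y/P)/2⌋ - 1 : ℤ) : ℝ), ?_, fract2_self _ hz1 hz2 _⟩
    have hfl := Int.floor_le ((-β/d - y/P)/2)
    push_cast
    linarith
  have hdneg : -β/d < 0 := div_neg_of_neg_of_pos (by linarith) hd
  have ht0 : t < 0 := lt_trans htlt hdneg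
  refine ⟨-β/t, ⟨?_, ?_⟩, ?_⟩
  · exact div_pos_of_neg_of_neg (by linarith) ht0
  · rw [div_lt_iff_of_neg ht0]
    have h1 : t * d < -β := by
      have := (lt_div_iff₀ hd).mp htlt
      linarith
    linarith [mul_comm d t]
  · rw [Ubeta_of_t hβ t (ne_of_lt ht0), hft]
    field_simp

-- capture from interval (c,0)
lemma capture_left (hP : 0 < P) (hβ : 0 < β) {c : ℝ} (hc : c < 0) :
    Ioc (-P) P ⊆ Ubeta P β '' Ioo c 0 := by
  rintro y ⟨hy1, hy2⟩
  have hz1 : -1 < y/P := by rw [lt_div_iff₀ hP]; linarith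
  have hz2 : y/P ≤ 1 := by rw [div_le_one hP]; linarith
  obtain ⟨t, htgt, hft⟩ : ∃ t : ℝ, -β/c < t ∧ fract2 t = y/P := by
    refine ⟨y/P + 2*((⌊(-β/c - y/P)/2⌋ + 1 : ℤ) : ℝ), ?_, fract2_self _ hz1 hz2 _⟩
    have hfl := Int.lt_floor_add_one ((-β/c - y/P)/2)
    push_cast
    linarith
  have hcpos : 0 < -β/c := div_pos_of_neg_of_neg (by linarith) hc
  have ht0 : 0 < t := lt_trans hcpos htgt
  refine ⟨-β/t, ⟨?_, ?_⟩, ?_⟩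
  · rw [lt_div_iff₀ ht0]
    have h1 : t * c < -β := by
      have := (div_lt_iff_of_neg hc).mp htgt
      linarith
    linarith [mul_comm c t]
  · exact div_neg_of_neg_of_pos (by linarith) ht0
  · rw [Ubeta_of_t hβ t (ne_of_gt ht0), hft]
    field_simp

-- capture when transformed range has length > 2
lemma capture_wide (hP : 0 < P) (hβ : 0 < β) {x₁ x₂ : ℝ} (hss : 0 < x₁ ∨ x₂ < 0)
    (h12 : x₁ < x₂) (hR : -β/x₁ + 2 < -β/x₂) :
    Ioc (-P) P ⊆ Ubeta P β '' Ioo x₁ x₂ := by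
  rintro y ⟨hy1, hy2⟩
  have hz1 : -1 < y/P := by rw [lt_div_iff₀ hP]; linarith
  have hz2 : y/P ≤ 1 := by rw [div_le_one hP]; linarith
  obtain ⟨t, ht1, ht2, hft⟩ : ∃ t : ℝ, -β/x₁ < t ∧ t ≤ -β/x₁ + 2 ∧ fract2 t = y/P := by
    refine ⟨y/P + 2*((⌊(-β/x₁ - y/P)/2⌋ + 1 : ℤ) : ℝ), ?_, ?_, fract2_self _ hz1 hz2 _⟩
    · have hfl := Int.lt_floor_add_one ((-β/x₁ - y/P)/2)
      push_cast
      linarith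
    · have hfl := Int.floor_le ((-β/x₁ - y/P)/2)
      push_cast
      linarith
  obtain ⟨m1, m2, m3⟩ := invmem hβ hss h12 ht1 (by linarith)
  exact ⟨-β/t, ⟨m1, m2⟩, by rw [Ubeta_of_t hβ t m3, hft]; field_simp⟩


lemma Ioo_bounds {a b x₁ x₂ : ℝ} (h : x₁ < x₂) (hs : Ioo x₁ x₂ ⊆ Icc a b) :
    a ≤ x₁ ∧ x₂ ≤ b := by
  constructor
  · by_contra hlt
    push_neg at hlt
    have hmem := hs (show min ((x₁+x₂)/2) ((x₁+a)/2) ∈ Ioo x₁ x₂ from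
      ⟨lt_min (by linarith) (by linarith),
       lt_of_le_of_lt (min_le_left _ _) (by linarith)⟩)
    have h1 := hmem.1
    have hle := min_le_right ((x₁+x₂)/2) ((x₁+a)/2)
    linarith
  · by_contra hlt
    push_neg at hlt
    have hmem := hs (show max ((x₁+x₂)/2) ((x₂+b)/2) ∈ Ioo x₁ x₂ from
      ⟨lt_of_lt_of_le (by linarith) (le_max_left _ _),
       max_lt (by linarith) (by linarith)⟩)
    have h1 := hmem.2
    have hle := le_max_right ((x₁+x₂)/2) ((x₂+b)/2)
    linarith

lemma sub_branch_image (hP : 0 < P) (hβ0 : 0 < β) {x₁ x₂ : ℝ} (hss : 0 < x₁ ∨ x₂ < 0)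
    (h12 : x₁ < x₂) (j : ℤ) {a' b' : ℝ} (ha : -β/x₁ ≤ a' + 2*(j:ℝ)) (hb : b' + 2*(j:ℝ) ≤ -β/x₂)
    (ha1 : -1 ≤ a') (hb1 : b' ≤ 1) :
    Ioo (P*a') (P*b') ⊆ Ubeta P β '' Ioo x₁ x₂ := by
  rintro y ⟨hy1, hy2⟩
  have hz1 : a' < y/P := by rw [lt_div_iff₀ hP]; linarith [mul_comm a' P]
  have hz2 : y/P < b' := by rw [div_lt_iff₀ hP]; linarith [mul_comm b' P]
  set t := y/P + 2*(j:ℝ) with hT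
  have ht1 : -β/x₁ < t := by rw [hT]; linarith
  have ht2 : t < -β/x₂ := by rw [hT]; linarith
  obtain ⟨m1, m2, m3⟩ := invmem hβ0 hss h12 ht1 ht2
  refine ⟨-β/t, ⟨m1, m2⟩, ?_⟩
  rw [Ubeta_of_t hβ0 t m3, fract2_branch j t (by rw [hT]; linarith) (by rw [hT]; linarith)]
  rw [hT]
  field_simp
  ring

set_option maxHeartbeats 2000000 in
lemma main_step (hP : 0 < P) (hPβ : P < β) {x₁ x₂ : ℝ} (h12 : x₁ < x₂)
    (hsub : Ioo x₁ x₂ ⊆ Icc (-P) P) :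
    Ioc (-P) P ⊆ Ubeta P β '' Ioo x₁ x₂ ∨
    ∃ y₁ y₂ : ℝ, y₁ < y₂ ∧ Ioo y₁ y₂ ⊆ Icc (-P) P ∧ Ioo y₁ y₂ ⊆ Ubeta P β '' Ioo x₁ x₂ ∧
      min (3/2) (β/P) * (x₂ - x₁) ≤ y₂ - y₁ := by
  have hβ0 : 0 < β := lt_trans hP hPβ
  obtain ⟨hb1, hb2⟩ := Ioo_bounds h12 hsub
  by_cases h0 : x₁ ≤ 0 ∧ 0 ≤ x₂
  · left
    rcases lt_or_ge 0 x₂ with hx2 | hx2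
    · refine subset_trans (capture_right hP hβ0 hx2) (image_mono ?_)
      exact fun w hw => ⟨lt_of_le_of_lt h0.1 hw.1, hw.2⟩
    · have hx20 : x₂ = 0 := le_antisymm hx2 h0.2
      refine subset_trans (capture_left hP hβ0 (show x₁ < 0 by rw [← hx20]; exact h12))
        (image_mono ?_)
      exact fun w hw => ⟨hw.1, by rw [hx20]; exact hw.2⟩
  · have hss : 0 < x₁ ∨ x₂ < 0 := by
      rcases le_or_gt x₁ 0 with h | h
      · right; by_contra hh; push_neg at hh; exact h0 ⟨h, hh⟩
      · left; exact h
    -- names for range endpoints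
    have hx1ne : x₁ ≠ 0 := by rcases hss with h|h; exacts [ne_of_gt h, ne_of_lt (lt_trans h12 h)]
    have hx2ne : x₂ ≠ 0 := by rcases hss with h|h; exacts [ne_of_gt (lt_trans h h12), ne_of_lt h]
    set r : ℝ := -β/x₁ with hr
    set s : ℝ := -β/x₂ with hs
    have hprodpos : 0 < x₁ * x₂ := by
      rcases hss with h|h
      · exact mul_pos h (lt_trans h h12)
      · exact mul_pos_of_neg_of_neg (lt_trans h12 h) h
    have hprodeq : (s - r) * (x₁ * x₂) = β * (x₂ - x₁) := by
      rw [hr, hs]; field_simp; ring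
    have hrs : r < s := by
      nlinarith [hprodeq, hprodpos, h12, hβ0]
    clear_value r s
    by_cases hwide : r + 2 < s
    · left
      exact capture_wide hP hβ0 hss h12 (by rw [← hr, ← hs]; exact hwide)
    · push_neg at hwide  -- s ≤ r + 2
      by_cases hodd : ∃ k : ℤ, r < 2*(k:ℝ)+1 ∧ 2*(k:ℝ)+1 < s
      · obtain ⟨k, hk1, hk2⟩ := hodd
        right
        -- expansion ≥ 3 : P * (s - r) > 3 * (x₂ - x₁)
        have hkey : 3 * (x₂ - x₁) < P * (s - r) := by
          rcases hss with hpos | hneg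
          · have hx2pos : 0 < x₂ := lt_trans hpos h12
            -- s ≤ -β/P < -1
            have hsneg : s < -1 := by
              rw [hs]
              have h1 : β / P ≤ β / x₂ := div_le_div_of_nonneg_left (le_of_lt hβ0) hx2pos hb2
              have h2 : 1 < β / P := (one_lt_div hP).mpr hPβ
              have h3 : -β/x₂ = -(β/x₂) := neg_div x₂ β
              linarith
            have hkle : (k:ℝ) < -1 := by linarith
            have hkZ : k < -1 := by exact_mod_cast hkle
            have hm3 : 2*(k:ℝ)+1 ≤ -3 := by
              have h' : k ≤ -2 := by omega
              have h'' : (k:ℝ) ≤ -2 := by exact_mod_cast h'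
              linarith
            -- from r < m : -β < (2k+1) x₁, so 3 x₁ < β
            have h4 : -β < (2*(k:ℝ)+1) * x₁ := by
              have := (div_lt_iff₀ hpos).mp (show -β/x₁ < 2*(k:ℝ)+1 from hr ▸ hk1)
              linarith
            have h5 : 3 * x₁ < β := by nlinarith
            have h6 : x₁ * x₂ < β * P / 3 := by nlinarith
            nlinarith [hrs]
          · have hx1neg : x₁ < 0 := lt_trans h12 hneg
            have hrpos : 1 < r := by
              rw [hr]
              have h1 : β / P ≤ β / (-x₁) := div_le_div_of_nonneg_left (le_of_lt hβ0) (by linarith) (by linarith)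
              have h2 : 1 < β / P := (one_lt_div hP).mpr hPβ
              have h3 : -β/x₁ = β/(-x₁) := by ring
              linarith
            have hkge : (1:ℝ) < 2*(k:ℝ)+1 := by linarith
            have hkZ : 1 ≤ k := by
              have : (0:ℝ) < (k:ℝ) := by linarith
              exact_mod_cast this
            have hm3 : (3:ℝ) ≤ 2*(k:ℝ)+1 := by
              have : (1:ℝ) ≤ (k:ℝ) := by exact_mod_cast hkZ
              linarith
            -- from m < s : (2k+1)(-x₂) < β, so 3(-x₂) < β
            have h4 : -β < (2*(k:ℝ)+1) * x₂ :=
              (lt_div_iff_of_neg hneg).mp (show 2*(k:ℝ)+1 < -β/x₂ from hs ▸ hk2)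
            have h5 : 3 * (-x₂) < β := by nlinarith
            have h6 : x₁ * x₂ < β * P / 3 := by nlinarith
            nlinarith [hrs]
        have hg : min (3/2 : ℝ) (β/P) ≤ 3/2 := min_le_left _ _
        rcases le_total (2*(k:ℝ)+1 - r) (s - (2*(k:ℝ)+1)) with hc | hc
        · -- upper piece: (-P, -P + P*(s - m))
          refine ⟨P * (-1), P * (s - (2*(k:ℝ)+1) - 1), ?_, ?_, ?_, ?_⟩
          · exact mul_lt_mul_of_pos_left (by linarith) hP
          · intro w hw
            have hw1 := hw.1
            have hw2 := hw.2
            have e1 : P * (-1) = -P := by ring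
            have hup : P * (s - (2*(k:ℝ)+1) - 1) ≤ P * 1 :=
              mul_le_mul_of_nonneg_left (by linarith) (le_of_lt hP)
            exact ⟨by linarith, by linarith⟩
          · refine sub_branch_image hP hβ0 hss h12 (k+1) ?_ ?_ ?_ ?_
            · rw [← hr]; push_cast; linarith
            · rw [← hs]; push_cast; linarith
            · linarith
            · linarith
          · have he : P * (s - (2*(k:ℝ)+1) - 1) - P * (-1) = P * (s - (2*(k:ℝ)+1)) := by ring
            rw [he]
            have h1 : min (3/2 : ℝ) (β/P) * (x₂ - x₁) ≤ 3/2 * (x₂ - x₁) :=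
              mul_le_mul_of_nonneg_right hg (by linarith)
            have h2 : P * (s - r) ≤ P * (2 * (s - (2*(k:ℝ)+1))) :=
              mul_le_mul_of_nonneg_left (by linarith) (le_of_lt hP)
            have h3 : P * (2 * (s - (2*(k:ℝ)+1))) = 2 * (P * (s - (2*(k:ℝ)+1))) := by ring
            linarith
        · -- lower piece: (P*(1 - (m - r)), P)
          refine ⟨P * (1 - (2*(k:ℝ)+1 - r)), P * 1, ?_, ?_, ?_, ?_⟩
          · exact mul_lt_mul_of_pos_left (by linarith) hP
          · intro w hw
            have hw1 := hw.1
            have hw2 := hw.2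
            have e1 : P * 1 = P := by ring
            have hlo : P * (-1) ≤ P * (1 - (2*(k:ℝ)+1 - r)) :=
              mul_le_mul_of_nonneg_left (by linarith) (le_of_lt hP)
            have e2 : P * (-1) = -P := by ring
            exact ⟨by linarith, by linarith⟩
          · refine sub_branch_image hP hβ0 hss h12 k ?_ ?_ ?_ ?_
            · rw [← hr]; push_cast; linarith
            · rw [← hs]; push_cast; linarith
            · linarith
            · linarith
          · have he : P * 1 - P * (1 - (2*(k:ℝ)+1 - r)) = P * (2*(k:ℝ)+1 - r) := by ring
            rw [he]
            have h1 : min (3/2 : ℝ) (β/P) * (x₂ - x₁) ≤ 3/2 * (x₂ - x₁) :=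
              mul_le_mul_of_nonneg_right hg (by linarith)
            have h2 : P * (s - r) ≤ P * (2 * (2*(k:ℝ)+1 - r)) :=
              mul_le_mul_of_nonneg_left (by linarith) (le_of_lt hP)
            have h3 : P * (2 * (2*(k:ℝ)+1 - r)) = 2 * (P * (2*(k:ℝ)+1 - r)) := by ring
            linarith
      · -- no odd in (r,s): single branch
        right
        set k' : ℤ := ⌊(r-1)/2⌋ with hk'
        have hfl1 : ((k':ℤ):ℝ) ≤ (r-1)/2 := by rw [hk']; exact_mod_cast Int.floor_le ((r-1)/2)
        have hfl2 : (r-1)/2 < (k':ℝ) + 1 := by rw [hk']; exact_mod_cast Int.lt_floor_add_one ((r-1)/2)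
        clear_value k'
        have hm'le : 2*(k':ℝ) + 1 ≤ r := by linarith
        have hm'gt : r < 2*(k':ℝ) + 3 := by linarith
        have hsle : s ≤ 2*(k':ℝ) + 3 := by
          by_contra hh
          push_neg at hh
          exact hodd ⟨k' + 1, by push_cast; constructor <;> linarith⟩
        -- growth: P*(s-r) ≥ (β/P)*(x₂-x₁)
        have hgrow : (β/P) * (x₂ - x₁) ≤ P * (s - r) := by
          have hPP : x₁ * x₂ ≤ P^2 := by
            rcases hss with h|h
            · nlinarith [hb2, lt_trans h h12]
            · nlinarith [hb1, lt_trans h12 h]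
          rw [div_mul_eq_mul_div, div_le_iff₀ hP]
          have h2 : (s - r) * (x₁ * x₂) ≤ (s - r) * P^2 :=
            mul_le_mul_of_nonneg_left hPP (by linarith)
          have h3 : (s - r) * P^2 = P * (s - r) * P := by ring
          linarith
        refine ⟨P * (r - 2*((k':ℝ)+1)), P * (s - 2*((k':ℝ)+1)), ?_, ?_, ?_, ?_⟩
        · exact mul_lt_mul_of_pos_left (by linarith) hP
        · intro w hw
          have hw1 := hw.1
          have hw2 := hw.2
          have hlo : P * (-1) ≤ P * (r - 2*((k':ℝ)+1)) :=
            mul_le_mul_of_nonneg_left (by linarith) (le_of_lt hP)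
          have hup : P * (s - 2*((k':ℝ)+1)) ≤ P * 1 :=
            mul_le_mul_of_nonneg_left (by linarith) (le_of_lt hP)
          have e1 : P * (-1) = -P := by ring
          have e2 : P * 1 = P := by ring
          exact ⟨by linarith, by linarith⟩
        · refine sub_branch_image hP hβ0 hss h12 (k'+1) ?_ ?_ ?_ ?_
          · rw [← hr]; push_cast; linarith
          · rw [← hs]; push_cast; linarith
          · linarith
          · linarith
        · have he : P * (s - 2*((k':ℝ)+1)) - P * (r - 2*((k':ℝ)+1)) = P * (s - r) := by ring
          rw [he]
          have h1 : min (3/2 : ℝ) (β/P) * (x₂ - x₁) ≤ (β/P) * (x₂ - x₁) :=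
            mul_le_mul_of_nonneg_right (min_le_right _ _) (by linarith)
          linarith [hgrow]


lemma grow (hP : 0 < P) (hPβ : P < β) :
    ∀ (k : ℕ) (x₁ x₂ : ℝ), x₁ < x₂ → Ioo x₁ x₂ ⊆ Icc (-P) P →
      2*P ≤ (min (3/2) (β/P))^k * (x₂ - x₁) →
      ∃ n : ℕ, 0 < n ∧ Ioc (-P) P ⊆ (Ubeta P β)^[n] '' Ioo x₁ x₂ := by
  have hg1 : (1:ℝ) < min (3/2) (β/P) := by
    apply lt_min (by norm_num) ((one_lt_div hP).mpr hPβ)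
  intro k
  induction k with
  | zero =>
    intro x₁ x₂ h12 hsub hlen
    rcases main_step hP hPβ h12 hsub with hcap | ⟨y₁, y₂, hy12, hyI, _, hylen⟩
    · exact ⟨1, one_pos, by simpa using hcap⟩
    · exfalso
      obtain ⟨hb1, hb2⟩ := Ioo_bounds hy12 hyI
      simp only [pow_zero, one_mul] at hlen
      nlinarith [hylen, hg1, h12]
  | succ k ih =>
    intro x₁ x₂ h12 hsub hlen
    rcases main_step hP hPβ h12 hsub with hcap | ⟨y₁, y₂, hy12, hyI, hyim, hylen⟩
    · exact ⟨1, one_pos, by simpa using hcap⟩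
    · have hlen' : 2*P ≤ (min (3/2) (β/P))^k * (y₂ - y₁) := by
        have hgk : (0:ℝ) < (min (3/2) (β/P))^k := pow_pos (by linarith) k
        have h1 : (min (3/2) (β/P))^k * (min (3/2) (β/P) * (x₂ - x₁)) ≤
            (min (3/2) (β/P))^k * (y₂ - y₁) :=
          mul_le_mul_of_nonneg_left hylen (le_of_lt hgk)
        have h2 : (min (3/2) (β/P))^(k+1) * (x₂ - x₁) =
            (min (3/2) (β/P))^k * (min (3/2) (β/P) * (x₂ - x₁)) := by ring
        linarith [hlen, h2 ▸ hlen]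
      obtain ⟨n, hn, hcap⟩ := ih y₁ y₂ hy12 hyI hlen'
      refine ⟨n + 1, Nat.succ_pos n, ?_⟩
      have : (Ubeta P β)^[n+1] '' Ioo x₁ x₂ = (Ubeta P β)^[n] '' (Ubeta P β '' Ioo x₁ x₂) := by
        rw [Function.iterate_succ, Set.image_comp]
      rw [this]
      exact subset_trans hcap (Set.image_mono hyim)

theorem iterates_cover (p : ℕ) (hp : 0 < p) (β : ℝ) (hβ : (p : ℝ) < β)
    (a b : ℝ) (hab : a < b) (hJ : Set.Ioo a b ⊆ Set.Icc (-(p : ℝ)) p) :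
    ∃ n₀ : ℕ, 0 < n₀ ∧ ∀ n ≥ n₀, Set.Ioo (-(p : ℝ)) p ⊆ (Ubeta p β)^[n] '' Set.Ioo a b := by
  have hP : (0:ℝ) < (p:ℝ) := by exact_mod_cast hp
  have hβ0 : (0:ℝ) < β := lt_trans hP hβ
  obtain ⟨k, hk⟩ := pow_unbounded_of_one_lt (2*(p:ℝ)/(b-a))
    (show (1:ℝ) < min (3/2) (β/(p:ℝ)) from lt_min (by norm_num) ((one_lt_div hP).mpr hβ))
  have hlen : 2*(p:ℝ) ≤ (min (3/2) (β/(p:ℝ)))^k * (b - a) := by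
    rw [div_lt_iff₀ (by linarith : (0:ℝ) < b - a)] at hk
    linarith
  obtain ⟨n₁, hn₁, hcap⟩ := grow hP hβ k a b hab hJ hlen
  refine ⟨n₁, hn₁, ?_⟩
  intro n hn
  induction n with
  | zero => omega
  | succ n ih =>
    by_cases hle : n₁ ≤ n
    · have hprev := ih hle
      have hstep : (Ubeta (p:ℝ) β)^[n+1] '' Ioo a b
          = Ubeta (p:ℝ) β '' ((Ubeta (p:ℝ) β)^[n] '' Ioo a b) := by
        rw [Function.iterate_succ', Set.image_comp]
      rw [hstep]
      have hsub0 : Ioo (-((p:ℝ)/2)) 0 ⊆ (Ubeta (p:ℝ) β)^[n] '' Ioo a b := by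
        refine subset_trans ?_ hprev
        intro w hw
        exact ⟨by linarith [hw.1], by linarith [hw.2, hP]⟩
      exact subset_trans Ioo_subset_Ioc_self
        (subset_trans (capture_left hP hβ0 (by linarith : -((p:ℝ)/2) < 0))
          (Set.image_mono hsub0))
    · have heq : n₁ = n+1 := by omega
      rw [← heq]
      exact subset_trans Ioo_subset_Ioc_self hcap

end
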